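/- Radial monotonicity of the effective Hamiltonian: Let H : ℝ^N × ℝ^N → ℝ be continuous, ℤ^N-periodic in its first variable, and coercive, and let H̄(P) denote the effective Hamiltonian, i.e., the unique critical value of the cell problem H(x, Du + P) = a on T^N. If H(x, p) ≤ H(x, k p) for all x ∈ ℝ^N, p ∈ ℝ^N and all real k ≥ 1, then H̄(P) ≤ H̄(k P) for all P ∈ ℝ^N and all real k ≥ 1. -/

import Mathlib

open Set Filter MeasureTheory

noncomputable section

abbrev Euc (N : ℕ) := EuclideanSpace ℝ (Fin N)

def intVec {N : ℕ} (z : Fin N → ℤ) : Euc N :=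
  (EuclideanSpace.equiv (Fin N) ℝ).symm (fun i => (z i : ℝ))

def IsZPeriodic {N : ℕ} (u : Euc N → ℝ) : Prop :=
  ∀ (x : Euc N) (z : Fin N → ℤ), u (x + intVec z) = u x

def IsZPeriodicH {N : ℕ} (H : Euc N → Euc N → ℝ) : Prop :=
  ∀ (x p : Euc N) (z : Fin N → ℤ), H (x + intVec z) p = H x p

def superDiff {N : ℕ} (u : Euc N → ℝ) (x : Euc N) : Set (Euc N) :=
  { q | ∃ φ : Euc N → ℝ, ContDiff ℝ 1 φ ∧ IsZPeriodic φ ∧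
        (∀ y, u y - φ y ≤ u x - φ x) ∧ q = gradient φ x }

def subDiff {N : ℕ} (u : Euc N → ℝ) (x : Euc N) : Set (Euc N) :=
  { q | ∃ φ : Euc N → ℝ, ContDiff ℝ 1 φ ∧ IsZPeriodic φ ∧
        (∀ y, u x - φ x ≤ u y - φ y) ∧ q = gradient φ x }

def IsCellSubsolution {N : ℕ} (H : Euc N → Euc N → ℝ) (P : Euc N) (a : ℝ) (u : Euc N → ℝ) : Prop :=
  ∀ x, ∀ q ∈ superDiff u x, H x (q + P) ≤ a

def IsCellSupersolution {N : ℕ} (H : Euc N → Euc N → ℝ) (P : Euc N) (a : ℝ) (u : Euc N → ℝ) : Prop :=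
  ∀ x, ∀ q ∈ subDiff u x, a ≤ H x (q + P)

def IsCellSolution {N : ℕ} (H : Euc N → Euc N → ℝ) (P : Euc N) (u : Euc N → ℝ) (a : ℝ) : Prop :=
  (∃ K : NNReal, LipschitzWith K u) ∧ IsZPeriodic u ∧
    IsCellSubsolution H P a u ∧ IsCellSupersolution H P a u

def IsCoerciveH {N : ℕ} (H : Euc N → Euc N → ℝ) : Prop :=
  ∀ C : ℝ, ∃ r : ℝ, ∀ x p : Euc N, r ≤ ‖p‖ → C ≤ H x p

/-! ### Auxiliary material for the proof -/

section Aux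

open Topology

lemma intVec_apply {N : ℕ} (z : Fin N → ℤ) (i : Fin N) : intVec z i = z i := rfl

/-- The basic 1-periodic bump `1 - cos(2πt)`. -/
def gfun (t : ℝ) : ℝ := 1 - Real.cos (2 * Real.pi * t)

lemma gfun_nonneg (t : ℝ) : 0 ≤ gfun t := by
  simp [gfun, Real.cos_le_one]

lemma gfun_zero : gfun 0 = 0 := by simp [gfun]

lemma gfun_int_add (t : ℝ) (n : ℤ) : gfun (t + n) = gfun t := by
  have : 2 * Real.pi * (t + n) = 2 * Real.pi * t + n * (2 * Real.pi) := by ring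
  simp [gfun, this, Real.cos_add_int_mul_two_pi]

lemma gfun_neg (t : ℝ) : gfun (-t) = gfun t := by
  simp [gfun, mul_neg, Real.cos_neg]

lemma gfun_contDiff : ContDiff ℝ 1 gfun := by
  exact contDiff_const.sub ((Real.contDiff_cos).comp (contDiff_const.mul contDiff_id))

lemma gfun_lower {s t : ℝ} (hs : 0 < s) (hs2 : s ≤ 1/2) (hst : s ≤ |t|) (ht : |t| ≤ 1/2) :
    1 - Real.cos (2 * Real.pi * s) ≤ gfun t := by
  have h : gfun t = gfun |t| := by
    rcases abs_cases t with ⟨h, _⟩ | ⟨h, _⟩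
    · rw [h]
    · rw [h, gfun_neg]
  rw [h]
  have hmono : Real.cos (2 * Real.pi * |t|) ≤ Real.cos (2 * Real.pi * s) := by
    apply Real.strictAntiOn_cos.antitoneOn
    · constructor
      · positivity
      · nlinarith [Real.pi_pos]
    · constructor
      · positivity
      · nlinarith [Real.pi_pos]
    · nlinarith [Real.pi_pos]
  simp only [gfun]
  linarith

lemma close_to_int {t s : ℝ} (hs : 0 < s) (hs2 : s ≤ 1/2)
    (h : gfun t < 1 - Real.cos (2 * Real.pi * s)) : |t - round t| < s := by
  by_contra hcon
  push_neg at hcon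
  have h1 : |t - round t| ≤ 1/2 := abs_sub_round t
  have h2 : gfun (t - round t) = gfun t := by
    have h3 := gfun_int_add (t - round t) (round t)
    rw [sub_add_cancel] at h3
    exact h3.symm
  have h4 := gfun_lower hs hs2 hcon h1
  rw [h2] at h4
  linarith

/-- The periodic penalty function on `Euc N`. -/
def rho {N : ℕ} (w : Euc N) : ℝ := ∑ i, gfun (w i)

lemma rho_contDiff {N : ℕ} : ContDiff ℝ 1 (rho (N := N)) := by
  apply ContDiff.sum
  intro i _
  exact gfun_contDiff.comp (by exact (EuclideanSpace.proj (𝕜 := ℝ) i).contDiff)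

lemma rho_nonneg {N : ℕ} (w : Euc N) : 0 ≤ rho w :=
  Finset.sum_nonneg fun i _ => gfun_nonneg (w i)

lemma rho_zero {N : ℕ} : rho (0 : Euc N) = 0 := by
  unfold rho
  have h : ∀ i : Fin N, (0 : Euc N) i = 0 := fun _ => rfl
  simp [h, gfun_zero]

lemma rho_periodic {N : ℕ} (w : Euc N) (z : Fin N → ℤ) : rho (w + intVec z) = rho w := by
  unfold rho
  apply Finset.sum_congr rfl
  intro i _
  have : (w + intVec z) i = w i + (z i : ℝ) := rfl
  rw [this, gfun_int_add]

lemma rho_sub_intVec {N : ℕ} (w : Euc N) (z : Fin N → ℤ) : rho (w - intVec z) = rho w := by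
  have h := rho_periodic (w - intVec z) z
  rw [sub_add_cancel] at h
  exact h.symm

/-- The unit cube in `Euc N`. -/
def cube (N : ℕ) : Set (Euc N) := {x | ∀ i, x i ∈ Icc (0:ℝ) 1}

lemma cube_compact (N : ℕ) : IsCompact (cube N) := by
  have : cube N = (EuclideanSpace.equiv (Fin N) ℝ).symm '' (Set.pi univ fun _ => Icc (0:ℝ) 1) := by
    ext x
    constructor
    · intro hx
      exact ⟨fun i => x i, fun i _ => hx i, rfl⟩
    · rintro ⟨f, hf, rfl⟩ i
      exact hf i (mem_univ i)
  rw [this]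
  exact (isCompact_univ_pi fun _ => isCompact_Icc).image
    (EuclideanSpace.equiv (Fin N) ℝ).symm.continuous

lemma exists_cube_rep {N : ℕ} (x : Euc N) :
    ∃ y ∈ cube N, ∃ z : Fin N → ℤ, x = y + intVec z := by
  refine ⟨x - intVec (fun i => ⌊x i⌋), ?_, fun i => ⌊x i⌋, by abel⟩
  intro i
  have : (x - intVec (fun i => ⌊x i⌋)) i = x i - (⌊x i⌋ : ℝ) := rfl
  rw [this]
  constructor
  · linarith [Int.floor_le (x i)]
  · linarith [Int.lt_floor_add_one (x i)]

lemma periodic_max {N : ℕ} (f : Euc N → ℝ) (hc : Continuous f)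
    (hp : ∀ x z, f (x + intVec z) = f x) :
    ∃ x ∈ cube N, ∀ y, f y ≤ f x := by
  obtain ⟨x₀, hx₀, hmax⟩ := (cube_compact N).exists_isMaxOn ⟨0, fun i => by norm_num⟩
    hc.continuousOn
  refine ⟨x₀, hx₀, fun y => ?_⟩
  obtain ⟨y', hy', z, rfl⟩ := exists_cube_rep y
  rw [hp]
  exact hmax hy'

lemma periodic_max2 {N : ℕ} (f : Euc N → Euc N → ℝ)
    (hc : Continuous fun q : Euc N × Euc N => f q.1 q.2)
    (hp1 : ∀ x y z, f (x + intVec z) y = f x y)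
    (hp2 : ∀ x y z, f x (y + intVec z) = f x y) :
    ∃ x ∈ cube N, ∃ y ∈ cube N, ∀ x' y', f x' y' ≤ f x y := by
  obtain ⟨q₀, hq₀, hmax⟩ := ((cube_compact N).prod (cube_compact N)).exists_isMaxOn
    ⟨(0, 0), ⟨fun i => by norm_num, fun i => by norm_num⟩⟩ hc.continuousOn
  refine ⟨q₀.1, hq₀.1, q₀.2, hq₀.2, fun x' y' => ?_⟩
  obtain ⟨x'', hx'', zx, rfl⟩ := exists_cube_rep x'
  obtain ⟨y'', hy'', zy, rfl⟩ := exists_cube_rep y'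
  rw [hp1, hp2]
  have : ((x'', y'') : Euc N × Euc N) ∈ (cube N) ×ˢ (cube N) := ⟨hx'', hy''⟩
  exact hmax this

lemma norm_le_of_abs_coord_le {N : ℕ} {x : Euc N} {s : ℝ} (hs : 0 ≤ s)
    (h : ∀ i, |x i| ≤ s) : ‖x‖ ≤ Real.sqrt N * s := by
  rw [EuclideanSpace.norm_eq]
  have h1 : ∑ i, ‖x i‖ ^ 2 ≤ (N : ℝ) * s ^ 2 := by
    calc ∑ i, ‖x i‖ ^ 2 ≤ ∑ _i : Fin N, s ^ 2 := by
          apply Finset.sum_le_sum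
          intro i _
          rw [Real.norm_eq_abs]
          exact pow_le_pow_left₀ (abs_nonneg _) (h i) 2
      _ = (N : ℝ) * s ^ 2 := by
          rw [Finset.sum_const, Finset.card_univ, Fintype.card_fin, nsmul_eq_mul]
  calc Real.sqrt (∑ i, ‖x i‖ ^ 2) ≤ Real.sqrt ((N : ℝ) * s ^ 2) := Real.sqrt_le_sqrt h1
    _ = Real.sqrt N * s := by
        rw [Real.sqrt_mul (by positivity), Real.sqrt_sq hs]

lemma grad_le_lip {N : ℕ} {u φ : Euc N → ℝ} {K : NNReal} (hu : LipschitzWith K u)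
    (hφ : ContDiff ℝ 1 φ) (x : Euc N) (hmin : ∀ y, u x - φ x ≤ u y - φ y) :
    ‖gradient φ x‖ ≤ K := by
  set G := gradient φ x with hGdef
  by_cases hG : G = 0
  · simp [hG]
  have hGn : (0:ℝ) < ‖G‖ := norm_pos_iff.2 hG
  set e : Euc N := ‖G‖⁻¹ • G with he
  have hene : ‖e‖ = 1 := by
    rw [he, norm_smul, norm_inv, norm_norm, inv_mul_cancel₀ (ne_of_gt hGn)]
  have hdiff : DifferentiableAt ℝ φ x := (hφ.differentiable one_ne_zero).differentiableAt
  have hgrad : HasGradientAt φ G x := hdiff.hasGradientAt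
  have hfd : HasFDerivAt φ (InnerProductSpace.toDual ℝ (Euc N) G) x :=
    hasGradientAt_iff_hasFDerivAt.mp hgrad
  have hline : HasDerivAt (fun t : ℝ => x + t • e) e 0 := by
    simpa using ((hasDerivAt_id (0:ℝ)).smul_const e).const_add x
  have hcomp : HasDerivAt (fun t : ℝ => φ (x + t • e)) ‖G‖ 0 := by
    have hfd' : HasFDerivAt φ (InnerProductSpace.toDual ℝ (Euc N) G) (x + (0:ℝ) • e) := by
      simpa using hfd
    have := hfd'.comp_hasDerivAt 0 hline
    have hval : (InnerProductSpace.toDual ℝ (Euc N) G) e = ‖G‖ := by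
      rw [InnerProductSpace.toDual_apply_apply, he, real_inner_smul_right,
        real_inner_self_eq_norm_sq]
      field_simp
    rwa [hval] at this
  have hslope : Tendsto (slope (fun t : ℝ => φ (x + t • e)) 0) (𝓝[>] 0) (𝓝 ‖G‖) :=
    (hasDerivAt_iff_tendsto_slope.mp hcomp).mono_left
      (nhdsWithin_mono _ fun t ht => ne_of_gt ht)
  have hbound : ∀ᶠ t in 𝓝[>] (0:ℝ), slope (fun t : ℝ => φ (x + t • e)) 0 t ≤ K := by
    filter_upwards [self_mem_nhdsWithin] with t ht
    have ht0 : (0:ℝ) < t := ht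
    have h1 : φ (x + t • e) - φ x ≤ u (x + t • e) - u x := by
      have := hmin (x + t • e)
      linarith
    have h2 : u (x + t • e) - u x ≤ K * t := by
      calc u (x + t • e) - u x ≤ dist (u (x + t • e)) (u x) := by
            rw [Real.dist_eq]; exact le_abs_self _
        _ ≤ K * dist (x + t • e) x := hu.dist_le_mul _ _
        _ = K * t := by
            rw [dist_eq_norm]
            simp [norm_smul, hene, abs_of_pos ht0]
    rw [slope_def_field]
    simp only [zero_smul, add_zero, sub_zero]
    rw [div_le_iff₀ ht0]
    nlinarith
  exact le_of_tendsto hslope hbound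

lemma hasGradientAt_smul_shift {N : ℕ} (f : Euc N → ℝ) (hf : ContDiff ℝ 1 f)
    (a : ℝ) (y₀ x : Euc N) :
    HasGradientAt (fun x => a * f (x - y₀)) (a • gradient f (x - y₀)) x := by
  set g := gradient f (x - y₀) with hg
  have hd : HasGradientAt f g (x - y₀) :=
    ((hf.differentiable one_ne_zero).differentiableAt).hasGradientAt
  have hfd : HasFDerivAt f (InnerProductSpace.toDual ℝ (Euc N) g) (x - y₀) :=
    hasGradientAt_iff_hasFDerivAt.mp hd
  have hshift : HasFDerivAt (fun x : Euc N => x - y₀) (ContinuousLinearMap.id ℝ (Euc N)) x :=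
    (hasFDerivAt_id x).sub_const y₀
  have hcomp := (hfd.comp x hshift).const_mul a
  have heq : a • ((InnerProductSpace.toDual ℝ (Euc N) g).comp (ContinuousLinearMap.id ℝ (Euc N)))
      = InnerProductSpace.toDual ℝ (Euc N) (a • g) := by
    rw [ContinuousLinearMap.comp_id, _root_.map_smul]
  rw [heq] at hcomp
  exact hasGradientAt_iff_hasFDerivAt.mpr hcomp

lemma hasGradientAt_smul_constsub {N : ℕ} (f : Euc N → ℝ) (hf : ContDiff ℝ 1 f)
    (a : ℝ) (x₀ y : Euc N) :
    HasGradientAt (fun y => a * f (x₀ - y)) (-(a • gradient f (x₀ - y))) y := by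
  set g := gradient f (x₀ - y) with hg
  have hd : HasGradientAt f g (x₀ - y) :=
    ((hf.differentiable one_ne_zero).differentiableAt).hasGradientAt
  have hfd : HasFDerivAt f (InnerProductSpace.toDual ℝ (Euc N) g) (x₀ - y) :=
    hasGradientAt_iff_hasFDerivAt.mp hd
  have hshift : HasFDerivAt (fun y : Euc N => x₀ - y) (-(ContinuousLinearMap.id ℝ (Euc N))) y :=
    (hasFDerivAt_id y).const_sub x₀
  have hcomp := (hfd.comp y hshift).const_mul a
  have heq : a • ((InnerProductSpace.toDual ℝ (Euc N) g).comp (-(ContinuousLinearMap.id ℝ (Euc N))))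
      = InnerProductSpace.toDual ℝ (Euc N) (-(a • g)) := by
    rw [_root_.map_neg, _root_.map_smul]
    ext w
    simp
  rw [heq] at hcomp
  exact hasGradientAt_iff_hasFDerivAt.mpr hcomp

end Aux

set_option maxHeartbeats 1000000 in
/-- Radial monotonicity of the effective Hamiltonian. -/
theorem effective_hamiltonian_radial_monotone {N : ℕ} (hN : 1 ≤ N)
    (H : Euc N → Euc N → ℝ)
    (hHc : Continuous fun q : Euc N × Euc N => H q.1 q.2)
    (hHp : IsZPeriodicH H)
    (hHcoer : IsCoerciveH H)
    (hHmono : ∀ (x p : Euc N) (k : ℝ), 1 ≤ k → H x p ≤ H x (k • p)) :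
    ∀ (P : Euc N) (k : ℝ), 1 ≤ k →
      ∀ (u v : Euc N → ℝ) (c d : ℝ),
        IsCellSolution H P u c → IsCellSolution H (k • P) v d →
        c ≤ d := by
  intro P k hk u v c d hu hv
  obtain ⟨⟨K, hKu⟩, hup, husub, husuper⟩ := hu
  obtain ⟨⟨Kv, hKv⟩, hvp, hvsub, hvsuper⟩ := hv
  have hk0 : (0:ℝ) < k := lt_of_lt_of_le one_pos hk
  have hucont : Continuous u := hKu.continuous
  have hvcont : Continuous v := hKv.continuous
  have hrhoc : Continuous (rho (N := N)) := rho_contDiff.continuous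
  suffices hh : ∀ δ : ℝ, 0 < δ → c ≤ d + δ by
    by_contra hcd
    push_neg at hcd
    have := hh ((c - d)/2) (by linarith)
    linarith
  intro δ hδ
  -- global max and min of u
  obtain ⟨xmax, _, humax⟩ := periodic_max u hucont hup
  obtain ⟨xmin, _, humin'⟩ := periodic_max (fun x => -u x) hucont.neg
    (fun x z => by simp [hup x z])
  have humin : ∀ y, u xmin ≤ u y := fun y => by have := humin' y; simpa using this
  set B := u xmax - u xmin with hB
  have hB0 : 0 ≤ B := by have := humin xmax; simp only [hB]; linarith
  -- uniform continuity on a compact set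
  have hsqN : (0:ℝ) ≤ Real.sqrt N := Real.sqrt_nonneg _
  set RX : ℝ := Real.sqrt N + 1 with hRX
  set R : ℝ := k * (K + ‖P‖) + 1 with hR
  set S : Set (Euc N × Euc N) := Metric.closedBall 0 RX ×ˢ Metric.closedBall 0 R with hS
  have hScomp : IsCompact S :=
    (isCompact_closedBall _ _).prod (isCompact_closedBall _ _)
  have hUC : UniformContinuousOn (fun q : Euc N × Euc N => H q.1 q.2) S :=
    hScomp.uniformContinuousOn_of_continuous hHc.continuousOn
  obtain ⟨η0, hη0, hUCd⟩ := Metric.uniformContinuousOn_iff.mp hUC δ hδ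
  set η : ℝ := min η0 1 with hη
  have hηpos : 0 < η := lt_min hη0 one_pos
  have hη1 : η ≤ 1 := min_le_right _ _
  set s : ℝ := min (1/2) (η / (2 * (Real.sqrt N + 1))) with hs
  have hspos : 0 < s := lt_min (by norm_num) (div_pos hηpos (by positivity))
  have hs2 : s ≤ 1/2 := min_le_left _ _
  set m : ℝ := 1 - Real.cos (2 * Real.pi * s) with hm
  have hmpos : 0 < m := by
    have h1 : Real.cos (2 * Real.pi * s) < Real.cos 0 :=
      @Real.strictAntiOn_cos 0
        (Set.mem_Icc.mpr ⟨le_rfl, Real.pi_nonneg⟩) (2 * Real.pi * s)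
        (Set.mem_Icc.mpr ⟨by positivity, by nlinarith [Real.pi_pos, hs2, hspos]⟩)
        (by positivity)
    rw [Real.cos_zero] at h1
    simp only [hm]
    linarith
  set ℓ : ℝ := (B + 1) / m with hℓ
  have hℓpos : 0 < ℓ := div_pos (by linarith) hmpos
  -- the doubled, penalized functional
  set f : Euc N → Euc N → ℝ := fun x y => v y - k * u x - (k * ℓ) * rho (x - y) with hf
  have hfc : Continuous fun q : Euc N × Euc N => f q.1 q.2 := by
    exact ((hvcont.comp continuous_snd).sub
      (continuous_const.mul (hucont.comp continuous_fst))).sub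
      (continuous_const.mul (hrhoc.comp (continuous_fst.sub continuous_snd)))
  have hfp1 : ∀ x y z, f (x + intVec z) y = f x y := by
    intro x y z
    simp only [hf]
    rw [hup, add_sub_right_comm, rho_periodic]
  have hfp2 : ∀ x y z, f x (y + intVec z) = f x y := by
    intro x y z
    simp only [hf]
    rw [hvp, sub_add_eq_sub_sub, rho_sub_intVec]
  obtain ⟨X, hX, Y, hY, hmax⟩ := periodic_max2 f hfc hfp1 hfp2
  -- test functions
  set φt : Euc N → ℝ := fun x => (-ℓ) * rho (x - Y) with hφt
  set ψt : Euc N → ℝ := fun y => (k * ℓ) * rho (X - y) with hψt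
  set G : Euc N := gradient (rho (N := N)) (X - Y) with hG
  have hgradφ : HasGradientAt φt ((-ℓ) • G) X :=
    hasGradientAt_smul_shift _ rho_contDiff _ Y X
  have hgradψ : HasGradientAt ψt (-((k * ℓ) • G)) Y :=
    hasGradientAt_smul_constsub _ rho_contDiff _ X Y
  set p : Euc N := (-ℓ) • G with hp
  have hφgrad : gradient φt X = p := hgradφ.gradient
  have hψgrad : gradient ψt Y = k • p := by
    rw [hgradψ.gradient, hp, smul_smul, show k * -ℓ = -(k * ℓ) by ring, neg_smul]
  have hφcd : ContDiff ℝ 1 φt :=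
    contDiff_const.mul (rho_contDiff.comp (contDiff_id.sub contDiff_const))
  have hψcd : ContDiff ℝ 1 ψt :=
    contDiff_const.mul (rho_contDiff.comp (contDiff_const.sub contDiff_id))
  have hφper : IsZPeriodic φt := by
    intro x z; simp only [hφt]; rw [add_sub_right_comm, rho_periodic]
  have hψper : IsZPeriodic ψt := by
    intro y z; simp only [hψt]; rw [sub_add_eq_sub_sub, rho_sub_intVec]
  -- the minimum property giving p ∈ subDiff u X
  have hmin : ∀ x', u X - φt X ≤ u x' - φt x' := by
    intro x'
    have hA := hmax x' Y
    simp only [hf] at hA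
    have h2 : k * (u X + ℓ * rho (X - Y)) ≤ k * (u x' + ℓ * rho (x' - Y)) := by nlinarith [hA]
    have h3 := (mul_le_mul_iff_right₀ hk0).mp h2
    simp only [hφt]
    linarith
  have hpmem : p ∈ subDiff u X := ⟨φt, hφcd, hφper, hmin, hφgrad.symm⟩
  have hc1 : c ≤ H X (p + P) := husuper X p hpmem
  -- the maximum property giving k • p ∈ superDiff v Y
  have hvmax : ∀ y', v y' - ψt y' ≤ v Y - ψt Y := by
    intro y'
    have hA := hmax X y'
    simp only [hf] at hA
    simp only [hψt]
    linarith
  have hkpmem : (k • p) ∈ superDiff v Y := ⟨ψt, hψcd, hψper, hvmax, hψgrad.symm⟩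
  have hd1 : H Y (k • p + k • P) ≤ d := hvsub Y (k • p) hkpmem
  -- the penalty is small
  have hrb : rho (X - Y) < m := by
    have hA := hmax Y Y
    simp only [hf] at hA
    rw [sub_self, rho_zero, mul_zero, sub_zero] at hA
    have hub : u Y - u X ≤ B := by
      have h5 := humax Y; have h6 := humin X; simp only [hB]; linarith
    have h2 : k * (ℓ * rho (X - Y)) ≤ k * B := by
      nlinarith [hA, mul_le_mul_of_nonneg_left hub hk0.le]
    have h3 := (mul_le_mul_iff_right₀ hk0).mp h2
    rw [hℓ] at h3
    by_contra hcon
    push_neg at hcon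
    have h4 : (B + 1) ≤ (B + 1) / m * rho (X - Y) := by
      rw [div_mul_eq_mul_div, le_div_iff₀ hmpos]
      nlinarith
    linarith
  -- coordinates of X - Y are close to integers
  set w : Euc N := X - Y with hw
  set z : Fin N → ℤ := fun i => round (w i) with hz
  set Y' : Euc N := Y + intVec z with hY'
  have hXY'v : X - Y' = w - intVec z := by rw [hY', hw, sub_add_eq_sub_sub]
  have hXY'c : ∀ i, |(X - Y') i| < s := by
    intro i
    have h1 : gfun (w i) < m := by
      have h2 : gfun (w i) ≤ rho w :=
        Finset.single_le_sum (fun j _ => gfun_nonneg (w j)) (Finset.mem_univ i)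
      rw [hw] at h2
      calc gfun (w i) ≤ rho (X - Y) := h2
        _ < m := hrb
    have h2 := close_to_int hspos hs2 h1
    have h3 : (X - Y') i = w i - (z i : ℝ) := by
      rw [hXY'v]; rfl
    rw [h3, hz]
    exact h2
  have hXY'norm : ‖X - Y'‖ < η := by
    have h1 : ‖X - Y'‖ ≤ Real.sqrt N * s :=
      norm_le_of_abs_coord_le hspos.le (fun i => (hXY'c i).le)
    have h2 : s ≤ η / (2 * (Real.sqrt N + 1)) := min_le_right _ _
    have h3 : Real.sqrt N * s ≤ Real.sqrt N * (η / (2 * (Real.sqrt N + 1))) :=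
      mul_le_mul_of_nonneg_left h2 hsqN
    have h4 : Real.sqrt N * (η / (2 * (Real.sqrt N + 1))) < η := by
      rw [mul_div_assoc', div_lt_iff₀ (by positivity)]
      nlinarith [mul_nonneg hsqN hηpos.le]
    linarith
  -- membership in the compact set
  have hXn : ‖X‖ ≤ Real.sqrt N := by
    have h1 : ‖X‖ ≤ Real.sqrt N * 1 :=
      norm_le_of_abs_coord_le zero_le_one (fun i => abs_le.mpr ⟨by linarith [(hX i).1], (hX i).2⟩)
    linarith [h1, mul_one (Real.sqrt N)]
  have hXS : X ∈ Metric.closedBall (0 : Euc N) RX := by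
    rw [Metric.mem_closedBall, dist_zero_right, hRX]
    linarith
  have hY'S : Y' ∈ Metric.closedBall (0 : Euc N) RX := by
    rw [Metric.mem_closedBall, dist_zero_right, hRX]
    have h1 : ‖Y'‖ ≤ ‖X‖ + ‖X - Y'‖ := by
      have h2 : Y' = X - (X - Y') := by abel
      calc ‖Y'‖ = ‖X - (X - Y')‖ := by rw [← h2]
        _ ≤ ‖X‖ + ‖X - Y'‖ := norm_sub_le _ _
    linarith
  set q : Euc N := k • p + k • P with hq
  have hpK : ‖p‖ ≤ K := by rw [← hφgrad]; exact grad_le_lip hKu hφcd X hmin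
  have hqS : q ∈ Metric.closedBall (0 : Euc N) R := by
    rw [Metric.mem_closedBall, dist_zero_right, hR]
    calc ‖q‖ ≤ ‖k • p‖ + ‖k • P‖ := norm_add_le _ _
      _ = k * ‖p‖ + k * ‖P‖ := by
          rw [norm_smul k p, norm_smul k P, Real.norm_eq_abs, abs_of_pos hk0]
      _ ≤ k * K + k * ‖P‖ := by nlinarith [hpK, hk0]
      _ ≤ k * (K + ‖P‖) + 1 := by nlinarith
  -- uniform continuity conclusion
  have hdist : dist ((X, q) : Euc N × Euc N) ((Y', q) : Euc N × Euc N) < η0 := by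
    rw [Prod.dist_eq]
    simp only [dist_self]
    have h1 : dist X Y' < η0 := by
      rw [dist_eq_norm]
      exact lt_of_lt_of_le hXY'norm (min_le_left _ _)
    calc max (dist X Y') 0 ≤ dist X Y' := max_le (le_refl _) dist_nonneg
      _ < η0 := h1
  have hHd := hUCd (X, q) ⟨hXS, hqS⟩ (Y', q) ⟨hY'S, hqS⟩ hdist
  have hHXq : H X q ≤ H Y' q + δ := by
    have h1 : |H X q - H Y' q| < δ := by
      rw [← Real.dist_eq]
      exact hHd
    have := (abs_lt.mp h1).2
    linarith
  have hHY' : H Y' q = H Y q := hHp Y q z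
  have hmono2 : H X (p + P) ≤ H X q := by
    have h1 := hHmono X (p + P) k hk
    rwa [smul_add] at h1
  calc c ≤ H X (p + P) := hc1
    _ ≤ H X q := hmono2
    _ ≤ H Y' q + δ := hHXq
    _ = H Y q + δ := by rw [hHY']
    _ ≤ d + δ := by linarith [hd1]
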